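/- Let V be a real vector space, m a natural number, and f: V → ℝ. Then the following are equivalent: (1) D_{v₁}⋯D_{v_{m+1}} f(x) = 0 for all v₁,…,v_{m+1} ∈ V and all x ∈ V, and for every finite-dimensional subspace U ⊆ V the restriction f|_U is continuous (equivalently, for every k and every injective linear map ι: ℝ^k → V the composition f ∘ ι is continuous); (2) for every k and every injective linear map ι: ℝ^k → V, the composition f ∘ ι: ℝ^k → ℝ is a polynomial function of total degree at most m. -/

import Mathlib

open Finset Function
open scoped fwdDiff

/-- The forward difference operator: `(D_v f)(x) = f(x + v) − f(x)`. -/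
def fwdDiffOp {V : Type*} [AddCommGroup V] (v : V) (f : V → ℝ) : V → ℝ :=
  fun x => f (x + v) - f x

lemma fwdDiffOp_eq_fwdDiff {V : Type*} [AddCommGroup V] (v : V) (f : V → ℝ) :
    fwdDiffOp v f = Δ_[v] f := rfl

/-- Transfer lemma for iterated differences along a map compatible with addition. -/
lemma foldr_fwdDiffOp_comp {U V : Type*} [AddCommGroup U] [AddCommGroup V]
    (φ : U → V) (ψ : U → V) (hφ : ∀ x w, φ (x + w) = φ x + ψ w)
    (F : V → ℝ) (l : List U) (x : U) :
    ((l.map ψ).foldr fwdDiffOp F) (φ x) = (l.foldr fwdDiffOp (fun y => F (φ y))) x := by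
  induction l generalizing x with
  | nil => rfl
  | cons w l ih =>
    simp only [List.map_cons, List.foldr_cons, fwdDiffOp, ← hφ, ih]

lemma foldr_replicate {V : Type*} [AddCommGroup V] (n : ℕ) (v : V) (f : V → ℝ) :
    (List.replicate n v).foldr fwdDiffOp f = (fwdDiff v)^[n] f := by
  induction n with
  | zero => rfl
  | succ n ih =>
    rw [List.replicate_succ, List.foldr_cons, ih, Function.iterate_succ_apply',
      fwdDiffOp_eq_fwdDiff]

lemma list_eq_ofFn {V : Type*} (l : List V) {n : ℕ} (hl : l.length = n) :
    l = List.ofFn (fun i : Fin n => l.get (Fin.cast hl.symm i)) := by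
  subst hl
  exact (List.ofFn_get l).symm

open MvPolynomial

noncomputable def shiftP {k : ℕ} (w : Fin k → ℝ) :
    MvPolynomial (Fin k) ℝ →ₐ[ℝ] MvPolynomial (Fin k) ℝ :=
  MvPolynomial.bind₁ (fun i => X i + C (w i))

lemma eval_shiftP {k : ℕ} (w x : Fin k → ℝ) (p : MvPolynomial (Fin k) ℝ) :
    eval x (shiftP w p) = eval (x + w) p := by
  rw [shiftP, show (eval x : MvPolynomial (Fin k) ℝ →+* ℝ) = eval₂Hom (RingHom.id ℝ) x from rfl,
    eval₂Hom_bind₁]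
  simp only [map_add, eval₂Hom_X', eval₂Hom_C, RingHom.id_apply]
  rfl

lemma shiftP_monomial_claim {k : ℕ} (w : Fin k → ℝ) :
    ∀ (n : ℕ) (u : Fin k →₀ ℕ), (u.sum fun _ e => e) = n →
      shiftP w (monomial u 1) = monomial u 1 ∨
        (shiftP w (monomial u 1) - monomial u 1).totalDegree + 1 ≤ n := by
  intro n
  induction n with
  | zero =>
    intro u hu
    left
    have : u = 0 := by
      ext a
      simp only [Finsupp.coe_zero, Pi.zero_apply]
      by_contra ha
      have : u a ≤ u.sum fun _ e => e := by
        rw [Finsupp.sum]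
        exact Finset.single_le_sum (fun i _ => Nat.zero_le _) (Finsupp.mem_support_iff.2 ha)
      omega
    subst this
    simp [monomial_zero', map_one]
  | succ n ih =>
    intro u hu
    obtain ⟨a, ha⟩ : ∃ a, u a ≠ 0 := by
      by_contra hcon
      push_neg at hcon
      have : u = 0 := by ext a; exact hcon a
      subst this
      simp [Finsupp.sum_zero_index] at hu
    set u' := u - Finsupp.single a 1 with hu'
    have hdec : Finsupp.single a 1 + u' = u := by
      ext i
      simp only [Finsupp.add_apply, Finsupp.tsub_apply, Finsupp.single_apply, hu']
      by_cases h : a = i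
      · subst h; simp; omega
      · simp [h]
    have hsum' : (u'.sum fun _ e => e) = n := by
      have := Finsupp.sum_add_index' (h := fun (_ : Fin k) (e : ℕ) => e)
        (fun _ => rfl) (fun _ _ _ => rfl) (f := Finsupp.single a 1) (g := u')
      rw [hdec] at this
      rw [Finsupp.sum_single_index rfl] at this
      omega
    have hmono : monomial u (1 : ℝ) = X a * monomial u' 1 := by
      rw [← hdec, monomial_single_add, pow_one]
    have hSt : shiftP w (X a * monomial u' 1)
        = (X a + C (w a)) * shiftP w (monomial u' 1) := by
      rw [map_mul]
      congr 1
      exact bind₁_X_right _ a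
    have hdegt : (monomial u' (1 : ℝ)).totalDegree = n := by
      rw [totalDegree_monomial _ one_ne_zero, hsum']
    rcases ih u' hsum' with h | h
    · right
      rw [hmono, hSt, h]
      have : (X a + C (w a)) * monomial u' (1:ℝ) - X a * monomial u' 1
          = C (w a) * monomial u' 1 := by ring
      rw [this]
      have hb : (C (w a) * monomial u' (1:ℝ)).totalDegree ≤ n := by
        calc (C (w a) * monomial u' (1:ℝ)).totalDegree
            ≤ (C (w a)).totalDegree + (monomial u' (1:ℝ)).totalDegree := totalDegree_mul _ _
          _ ≤ n := by rw [totalDegree_C, hdegt]; omega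
      omega
    · right
      rw [hmono, hSt]
      set t := monomial u' (1:ℝ)
      set D := shiftP w t - t with hD
      have hSt' : shiftP w t = t + D := by rw [hD]; ring
      have key : (X a + C (w a)) * shiftP w t - X a * t
          = X a * D + C (w a) * shiftP w t := by rw [hD]; ring
      rw [key]
      have h1 : (X a * D).totalDegree ≤ n := by
        calc (X a * D).totalDegree ≤ (X a : MvPolynomial (Fin k) ℝ).totalDegree + D.totalDegree :=
              totalDegree_mul _ _
          _ ≤ 1 + D.totalDegree := by rw [totalDegree_X]
          _ ≤ n := by omega
      have h2 : (C (w a) * shiftP w t).totalDegree ≤ n := by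
        calc (C (w a) * shiftP w t).totalDegree
            ≤ (C (w a)).totalDegree + (shiftP w t).totalDegree := totalDegree_mul _ _
          _ = (shiftP w t).totalDegree := by rw [totalDegree_C, zero_add]
          _ ≤ max t.totalDegree D.totalDegree := by
              rw [hSt']; exact totalDegree_add t D
          _ ≤ n := by rw [hdegt]; omega
      have := totalDegree_add (X a * D) (C (w a) * shiftP w t)
      omega

lemma totalDegree_shiftP_sub {k : ℕ} (w : Fin k → ℝ) (p : MvPolynomial (Fin k) ℝ) (d : ℕ)
    (h : p.totalDegree ≤ d + 1) : (shiftP w p - p).totalDegree ≤ d := by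
  have hrep : shiftP w p - p
      = ∑ u ∈ p.support, (shiftP w (monomial u (coeff u p)) - monomial u (coeff u p)) := by
    rw [Finset.sum_sub_distrib, ← map_sum, ← p.as_sum]
  rw [hrep]
  refine (totalDegree_finset_sum _ _).trans (Finset.sup_le ?_)
  intro u hu
  have hu1 : (u.sum fun _ e => e) ≤ d + 1 := (le_totalDegree hu).trans h
  have hc : monomial u (coeff u p) = C (coeff u p) * monomial u (1:ℝ) := by
    rw [C_mul_monomial, mul_one]
  rw [hc, map_mul, show shiftP w (C (coeff u p)) = C (coeff u p) from bind₁_C_right _ _,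
    ← mul_sub]
  rcases shiftP_monomial_claim w (u.sum fun _ e => e) u rfl with h1 | h1
  · rw [h1, sub_self, mul_zero]
    simp
  · calc (C (coeff u p) * (shiftP w (monomial u 1) - monomial u (1:ℝ))).totalDegree
        ≤ (C (coeff u p)).totalDegree
          + (shiftP w (monomial u 1) - monomial u (1:ℝ)).totalDegree := totalDegree_mul _ _
      _ ≤ d := by rw [totalDegree_C]; omega

lemma shiftP_of_deg_zero {k : ℕ} (w : Fin k → ℝ) (q : MvPolynomial (Fin k) ℝ)
    (h : q.totalDegree = 0) : shiftP w q = q := by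
  have h0 : ∀ u ∈ q.support, monomial u (coeff u q) = C (coeff u q) := by
    intro u hu
    have hu0 : u = 0 := by
      ext i; exact (totalDegree_eq_zero_iff _ q).1 h u hu i
    rw [hu0, C_apply]
  conv_lhs => rw [q.as_sum]
  rw [map_sum]
  conv_rhs => rw [q.as_sum]
  refine Finset.sum_congr rfl fun u hu => ?_
  rw [h0 u hu]
  exact bind₁_C_right _ _

lemma foldr_eval {k : ℕ} (l : List (Fin k → ℝ)) (p : MvPolynomial (Fin k) ℝ) :
    ∃ q : MvPolynomial (Fin k) ℝ,
      (∀ x, (l.foldr fwdDiffOp (fun y => eval y p)) x = eval x q) ∧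
      (q = 0 ∨ q.totalDegree + l.length ≤ p.totalDegree) := by
  induction l with
  | nil => exact ⟨p, fun x => rfl, Or.inr (by simp)⟩
  | cons w l ih =>
    obtain ⟨q, hq, hdeg⟩ := ih
    refine ⟨shiftP w q - q, fun x => ?_, ?_⟩
    · simp only [List.foldr_cons, fwdDiffOp, hq, map_sub, eval_shiftP]
    · rcases hdeg with rfl | hdeg
      · left; simp
      · rcases Nat.eq_zero_or_pos q.totalDegree with h0 | hpos
        · left; rw [shiftP_of_deg_zero w q h0, sub_self]
        · right
          have := totalDegree_shiftP_sub w q (q.totalDegree - 1) (by omega)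
          simp only [List.length_cons]
          omega

lemma dir_rev {V : Type*} [AddCommGroup V] [Module ℝ V] (m : ℕ) (f : V → ℝ)
    (h2 : ∀ (k : ℕ) (ι : (Fin k → ℝ) →ₗ[ℝ] V), Function.Injective ι →
      ∃ p : MvPolynomial (Fin k) ℝ, p.totalDegree ≤ m ∧
        ∀ x : Fin k → ℝ, f (ι x) = MvPolynomial.eval x p) :
    (∀ v : Fin (m + 1) → V, ∀ x : V, ((List.ofFn v).foldr fwdDiffOp f) x = 0) ∧
      (∀ (k : ℕ) (ι : (Fin k → ℝ) →ₗ[ℝ] V), Function.Injective ι → Continuous (f ∘ ι)) := by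
  constructor
  · intro v x
    set s : Set V := insert x (Set.range v) with hs
    have hfin : s.Finite := (Set.finite_range v).insert x
    set W := Submodule.span ℝ s with hW
    haveI : FiniteDimensional ℝ W := FiniteDimensional.span_of_finite ℝ hfin
    set k := Module.finrank ℝ W with hk
    let b : Module.Basis (Fin k) ℝ W := Module.finBasis ℝ W
    let e : (Fin k → ℝ) ≃ₗ[ℝ] W := b.equivFun.symm
    let ι : (Fin k → ℝ) →ₗ[ℝ] V := W.subtype.comp (e : (Fin k → ℝ) →ₗ[ℝ] W)
    have hι : Function.Injective ι := W.injective_subtype.comp e.injective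
    obtain ⟨p, hdeg, hp⟩ := h2 k ι hι
    have hmem : ∀ y ∈ s, ∃ z : Fin k → ℝ, ι z = y := by
      intro y hy
      have hyW : y ∈ W := Submodule.subset_span hy
      exact ⟨e.symm ⟨y, hyW⟩, by simp [ι]⟩
    obtain ⟨xh, hxh⟩ := hmem x (Set.mem_insert x _)
    choose vh hvh using fun i => hmem (v i) (Set.mem_insert_of_mem _ (Set.mem_range_self i))
    have hofn : List.ofFn v = (List.ofFn vh).map ι := by
      rw [List.map_ofFn]
      congr 1
      funext i
      exact (hvh i).symm
    rw [hofn, ← hxh, foldr_fwdDiffOp_comp ι ι (fun a b => map_add ι a b) f]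
    obtain ⟨q, hq, hdq⟩ := foldr_eval (List.ofFn vh) p
    have hfp : (fun y => f (ι y)) = fun y => eval y p := funext hp
    rw [hfp, hq]
    have hlen : (List.ofFn vh).length = m + 1 := List.length_ofFn
    have hq0 : q = 0 := by
      rcases hdq with h | h
      · exact h
      · exfalso; rw [hlen] at h; omega
    rw [hq0]
    simp
  · intro k ι hι
    obtain ⟨p, _, hp⟩ := h2 k ι hι
    have : f ∘ ι = fun x => eval x p := funext hp
    rw [this]
    exact MvPolynomial.continuous_eval p
section OneDim
open Polynomial Filter Topology

noncomputable def QP (j : ℕ) : Polynomial ℝ :=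
  Polynomial.C ((j.factorial : ℝ)⁻¹) * ∏ i ∈ range j, (Polynomial.X - Polynomial.C (i : ℝ))

lemma prod_range_cast_sub (n j : ℕ) :
    ∏ i ∈ range j, ((n : ℝ) - (i : ℝ)) = (n.descFactorial j : ℝ) := by
  induction j with
  | zero => simp
  | succ j ih =>
    rw [Finset.prod_range_succ, ih, Nat.descFactorial_succ]
    rcases le_or_gt j n with h | h
    · push_cast [h]
      ring
    · rw [Nat.descFactorial_eq_zero_iff_lt.2 h]
      simp

lemma QP_eval_nat (n j : ℕ) : Polynomial.eval (n : ℝ) (QP j) = (n.choose j : ℝ) := by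
  rw [QP, Polynomial.eval_mul, Polynomial.eval_C, Polynomial.eval_prod]
  simp only [Polynomial.eval_sub, Polynomial.eval_X, Polynomial.eval_C]
  rw [prod_range_cast_sub, Nat.descFactorial_eq_factorial_mul_choose]
  push_cast
  rw [← mul_assoc, inv_mul_cancel₀ (by exact_mod_cast j.factorial_ne_zero), one_mul]

lemma iter_fwdDiff_zero_of_ge (g : ℝ → ℝ) (h : ℝ) (m : ℕ)
    (H : (fwdDiff h)^[m + 1] g = 0) {j : ℕ} (hj : m + 1 ≤ j) : (fwdDiff h)^[j] g = 0 := by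
  obtain ⟨r, rfl⟩ := Nat.exists_eq_add_of_le hj
  rw [add_comm, Function.iterate_add_apply, H]
  refine Function.iterate_fixed ?_ r
  funext t
  simp [fwdDiff]

lemma claimA (m : ℕ) (g : ℝ → ℝ) (H : ∀ h : ℝ, (fwdDiff h)^[m + 1] g = 0)
    (a h : ℝ) (n : ℕ) :
    g (a + n * h) = ∑ j ∈ range (m + 1), (n.choose j : ℝ) * (fwdDiff h)^[j] g a := by
  have base := shift_eq_sum_fwdDiff_iter h g n a
  rw [nsmul_eq_mul] at base
  have hsub1 : range (n + 1) ⊆ range (max n m + 1) := by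
    apply Finset.range_subset_range.2; omega
  have hsub2 : range (m + 1) ⊆ range (max n m + 1) := by
    apply Finset.range_subset_range.2; omega
  have hleft : ∑ j ∈ range (n + 1), n.choose j • (fwdDiff h)^[j] g a
      = ∑ j ∈ range (max n m + 1), (n.choose j : ℝ) * (fwdDiff h)^[j] g a := by
    rw [← Finset.sum_subset hsub1]
    · exact Finset.sum_congr rfl fun j _ => (nsmul_eq_mul _ _)
    · intro j hj hnj
      simp only [Finset.mem_range] at hj hnj
      rw [Nat.choose_eq_zero_of_lt (by omega)]
      simp
  have hright : ∑ j ∈ range (m + 1), (n.choose j : ℝ) * (fwdDiff h)^[j] g a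
      = ∑ j ∈ range (max n m + 1), (n.choose j : ℝ) * (fwdDiff h)^[j] g a := by
    rw [← Finset.sum_subset hsub2]
    intro j hj hnj
    simp only [Finset.mem_range] at hj hnj
    rw [iter_fwdDiff_zero_of_ge g h m (H h) (by omega)]
    simp
  rw [base, hleft, ← hright]

noncomputable def qqh (m : ℕ) (g : ℝ → ℝ) (h a : ℝ) : Polynomial ℝ :=
  ∑ j ∈ range (m + 1), Polynomial.C ((fwdDiff h)^[j] g a) * QP j

lemma qqh_nat (m : ℕ) (g : ℝ → ℝ) (H : ∀ h : ℝ, (fwdDiff h)^[m + 1] g = 0)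
    (h a : ℝ) (n : ℕ) :
    Polynomial.eval (n : ℝ) (qqh m g h a) = g (a + n * h) := by
  rw [claimA m g H a h n, qqh, Polynomial.eval_finset_sum]
  refine Finset.sum_congr rfl fun j _ => ?_
  rw [Polynomial.eval_mul, Polynomial.eval_C, QP_eval_nat, mul_comm]

lemma qqh_scale (m : ℕ) (g : ℝ → ℝ) (H : ∀ h : ℝ, (fwdDiff h)^[m + 1] g = 0)
    (a : ℝ) (N : ℕ) (hN : N ≠ 0) :
    (qqh m g (1 / N) a).comp (Polynomial.C (N : ℝ) * Polynomial.X) = qqh m g 1 a := by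
  apply Polynomial.eq_of_infinite_eval_eq
  apply Set.infinite_of_injective_forall_mem (f := (Nat.cast : ℕ → ℝ)) Nat.cast_injective
  intro n
  simp only [Set.mem_setOf_eq, Polynomial.eval_comp, Polynomial.eval_mul, Polynomial.eval_C,
    Polynomial.eval_X]
  have h1 : ((N : ℝ) * n) = ((N * n : ℕ) : ℝ) := by push_cast; ring
  rw [h1, qqh_nat m g H _ a (N * n), qqh_nat m g H 1 a n]
  have hN' : (N : ℝ) ≠ 0 := Nat.cast_ne_zero.2 hN
  congr 1
  push_cast
  field_simp

lemma g_rat (m : ℕ) (g : ℝ → ℝ) (H : ∀ h : ℝ, (fwdDiff h)^[m + 1] g = 0)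
    (a : ℝ) (N : ℕ) (hN : N ≠ 0) (n : ℕ) :
    g (a + n / N) = Polynomial.eval ((n : ℝ) / N) (qqh m g 1 a) := by
  have hN' : (N : ℝ) ≠ 0 := Nat.cast_ne_zero.2 hN
  rw [← qqh_scale m g H a N hN, Polynomial.eval_comp, Polynomial.eval_mul, Polynomial.eval_C,
    Polynomial.eval_X]
  have h1 : (N : ℝ) * ((n : ℝ) / N) = ((n : ℕ) : ℝ) := by field_simp
  rw [h1, qqh_nat m g H _ a n]
  congr 1
  field_simp

lemma oneD_nonneg (m : ℕ) (g : ℝ → ℝ) (hc : Continuous g)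
    (H : ∀ h : ℝ, (fwdDiff h)^[m + 1] g = 0) (a x : ℝ) (hx : 0 ≤ x) :
    g (a + x) = Polynomial.eval x (qqh m g 1 a) := by
  have hu : Tendsto (fun N : ℕ => (⌊x * (N : ℝ)⌋₊ : ℝ) / N) atTop (𝓝 x) :=
    (tendsto_nat_floor_mul_div_atTop hx).comp tendsto_natCast_atTop_atTop
  have h1 : Tendsto (fun N : ℕ => g (a + (⌊x * (N : ℝ)⌋₊ : ℝ) / N)) atTop (𝓝 (g (a + x))) :=
    (hc.tendsto (a + x)).comp (tendsto_const_nhds.add hu)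
  have h2 : Tendsto (fun N : ℕ => Polynomial.eval ((⌊x * (N : ℝ)⌋₊ : ℝ) / N) (qqh m g 1 a))
      atTop (𝓝 (Polynomial.eval x (qqh m g 1 a))) :=
    ((qqh m g 1 a).continuous.tendsto x).comp hu
  refine tendsto_nhds_unique (h1.congr' ?_) h2
  filter_upwards [eventually_ge_atTop 1] with N hN
  exact g_rat m g H a N (by omega) _

lemma oneD (m : ℕ) (g : ℝ → ℝ) (hc : Continuous g)
    (H : ∀ h : ℝ, (fwdDiff h)^[m + 1] g = 0) (a x : ℝ) :
    g (a + x) = Polynomial.eval x (qqh m g 1 a) := by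
  set M := ⌈-x⌉₊ with hM
  have hxM : 0 ≤ x + M := by
    have := Nat.le_ceil (-x)
    rw [← hM] at this
    linarith
  have heq : qqh m g 1 a = (qqh m g 1 (a - M)).comp (Polynomial.X + Polynomial.C (M : ℝ)) := by
    apply Polynomial.eq_of_infinite_eval_eq
    apply Set.infinite_of_injective_forall_mem (f := (Nat.cast : ℕ → ℝ)) Nat.cast_injective
    intro n
    simp only [Set.mem_setOf_eq, Polynomial.eval_comp, Polynomial.eval_add, Polynomial.eval_X,
      Polynomial.eval_C]
    rw [← oneD_nonneg m g hc H a n (Nat.cast_nonneg n),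
      ← oneD_nonneg m g hc H (a - M) (n + M) (by positivity)]
    congr 1
    ring
  have hgoal : g (a + x) = g ((a - M) + (x + M)) := by congr 1; ring
  rw [hgoal, oneD_nonneg m g hc H (a - M) (x + M) hxM, heq, Polynomial.eval_comp]
  simp

end OneDim
section Multi

lemma continuous_iter_fwdDiff {n : ℕ} (v : Fin n → ℝ) (j : ℕ) (g : (Fin n → ℝ) → ℝ)
    (hg : Continuous g) : Continuous ((fwdDiff v)^[j] g) := by
  induction j with
  | zero => exact hg
  | succ j ih =>
    rw [Function.iterate_succ_apply']
    exact (ih.comp (continuous_id.add continuous_const)).sub ih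

lemma cons_add_cons (t w : ℝ) {k : ℕ} (x' w' : Fin k → ℝ) :
    (Fin.cons (t + w) (x' + w') : Fin (k + 1) → ℝ) = Fin.cons t x' + Fin.cons w w' := by
  funext i
  refine Fin.cases ?_ ?_ i
  · simp
  · intro i; simp

theorem main_poly : ∀ (k m : ℕ) (g : (Fin k → ℝ) → ℝ), Continuous g →
    (∀ l : List (Fin k → ℝ), l.length = m + 1 → ∀ x, (l.foldr fwdDiffOp g) x = 0) →
    ∃ p : MvPolynomial (Fin k) ℝ, p.totalDegree ≤ m ∧ ∀ x, g x = eval x p := by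
  intro k
  induction k with
  | zero =>
    intro m g hc H
    refine ⟨C (g (fun i => i.elim0)), by simp, fun x => ?_⟩
    rw [eval_C]
    congr 1
    funext i
    exact i.elim0
  | succ k IH =>
    intro m g hc H
    have hψadd : ∀ (x' w' : Fin k → ℝ),
        (Fin.cons (0:ℝ) (x' + w') : Fin (k+1) → ℝ) = Fin.cons 0 x' + Fin.cons 0 w' := by
      intro x' w'
      have := cons_add_cons 0 0 x' w'
      rwa [add_zero] at this
    have hex : ∀ j : ℕ, ∃ p : MvPolynomial (Fin k) ℝ, j ≤ m →
        p.totalDegree ≤ m - j ∧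
          ∀ x' : Fin k → ℝ,
            (fwdDiff (Fin.cons 1 0 : Fin (k+1) → ℝ))^[j] g (Fin.cons 0 x') = eval x' p := by
      intro j
      by_cases hj : j ≤ m
      · have hjc : Continuous (fun x' : Fin k → ℝ =>
            (fwdDiff (Fin.cons 1 0 : Fin (k+1) → ℝ))^[j] g (Fin.cons 0 x')) := by
          apply (continuous_iter_fwdDiff _ j g hc).comp
          apply continuous_pi
          intro i
          refine Fin.cases ?_ ?_ i
          · simpa using continuous_const
          · intro i; simpa using continuous_apply i
        have hjH : ∀ l : List (Fin k → ℝ), l.length = (m - j) + 1 → ∀ x',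
            (l.foldr fwdDiffOp (fun x' =>
              (fwdDiff (Fin.cons 1 0 : Fin (k+1) → ℝ))^[j] g (Fin.cons 0 x'))) x' = 0 := by
          intro l hl x'
          have htrans := foldr_fwdDiffOp_comp (fun x' : Fin k → ℝ => (Fin.cons 0 x' : Fin (k+1) → ℝ))
            (fun w' : Fin k → ℝ => (Fin.cons 0 w' : Fin (k+1) → ℝ)) hψadd
            ((fwdDiff (Fin.cons 1 0 : Fin (k+1) → ℝ))^[j] g) l x'
          rw [← htrans, ← foldr_replicate j _ g, ← List.foldr_append]
          apply H
          rw [List.length_append, List.length_map, List.length_replicate, hl]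
          omega
        obtain ⟨p, hp1, hp2⟩ := IH (m - j) _ hjc hjH
        exact ⟨p, fun _ => ⟨hp1, hp2⟩⟩
      · exact ⟨0, fun h => absurd h hj⟩
    choose P hP using hex
    refine ⟨∑ j ∈ Finset.range (m+1),
      (C ((j.factorial : ℝ)⁻¹) * ∏ i ∈ Finset.range j, (X 0 - C (i:ℝ)))
        * rename Fin.succ (P j), ?_, ?_⟩
    · refine (totalDegree_finset_sum _ _).trans (Finset.sup_le fun j hj => ?_)
      simp only [Finset.mem_range] at hj
      have hBj : ((C ((j.factorial : ℝ)⁻¹) * ∏ i ∈ Finset.range j, (X 0 - C (i:ℝ)))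
          : MvPolynomial (Fin (k+1)) ℝ).totalDegree ≤ j := by
        refine (totalDegree_mul _ _).trans ?_
        rw [totalDegree_C, zero_add]
        refine (totalDegree_finset_prod _ _).trans ?_
        calc ∑ i ∈ Finset.range j, ((X 0 - C (i:ℝ)) : MvPolynomial (Fin (k+1)) ℝ).totalDegree
            ≤ ∑ _i ∈ Finset.range j, 1 := by
              refine Finset.sum_le_sum fun i _ => ?_
              refine (totalDegree_sub _ _).trans ?_
              rw [totalDegree_X, totalDegree_C]
              omega
          _ = j := by simp
      have hrj : (rename Fin.succ (P j)).totalDegree ≤ m - j :=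
        (totalDegree_rename_le _ _).trans (hP j (by omega)).1
      refine (totalDegree_mul _ _).trans ?_
      omega
    · intro x
      have hφt : ∀ (t w : ℝ),
          (Fin.cons (t + w) (Fin.tail x) : Fin (k+1) → ℝ)
            = Fin.cons t (Fin.tail x) + Fin.cons w (0 : Fin k → ℝ) := by
        intro t w
        have := cons_add_cons t w (Fin.tail x) (0 : Fin k → ℝ)
        rwa [add_zero] at this
      have hsc : Continuous (fun t : ℝ => g (Fin.cons t (Fin.tail x))) := by
        apply hc.comp
        apply continuous_pi
        intro i
        refine Fin.cases ?_ ?_ i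
        · simpa using continuous_id'
        · intro i; simpa using continuous_const
      have hsH : ∀ h : ℝ, (fwdDiff h)^[m+1] (fun t : ℝ => g (Fin.cons t (Fin.tail x))) = 0 := by
        intro h
        funext t
        simp only [Pi.zero_apply]
        rw [← foldr_replicate (m+1) h]
        have h2 := foldr_fwdDiffOp_comp (fun t : ℝ => (Fin.cons t (Fin.tail x) : Fin (k+1) → ℝ))
          (fun w : ℝ => (Fin.cons w 0 : Fin (k+1) → ℝ)) hφt g (List.replicate (m+1) h) t
        rw [← h2]
        apply H
        rw [List.length_map, List.length_replicate]
      have hone := oneD m _ hsc hsH 0 (x 0)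
      rw [zero_add] at hone
      have hcoef : ∀ j, j ≤ m →
          (fwdDiff (1:ℝ))^[j] (fun t : ℝ => g (Fin.cons t (Fin.tail x))) 0
            = eval (Fin.tail x) (P j) := by
        intro j hj
        rw [← foldr_replicate j (1:ℝ)]
        have h2 := foldr_fwdDiffOp_comp (fun t : ℝ => (Fin.cons t (Fin.tail x) : Fin (k+1) → ℝ))
          (fun w : ℝ => (Fin.cons w 0 : Fin (k+1) → ℝ)) hφt g (List.replicate j 1) 0
        rw [← h2, List.map_replicate, foldr_replicate]
        exact (hP j hj).2 (Fin.tail x)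
      have hgx : g x = g (Fin.cons (x 0) (Fin.tail x)) := by
        congr 1
        exact (Fin.cons_self_tail x).symm
      rw [hgx, hone, qqh, Polynomial.eval_finset_sum, map_sum]
      refine Finset.sum_congr rfl fun j hj => ?_
      simp only [Finset.mem_range] at hj
      rw [Polynomial.eval_mul, Polynomial.eval_C, hcoef j (by omega), map_mul, eval_rename]
      have htail : x ∘ Fin.succ = Fin.tail x := rfl
      rw [htail, mul_comm]
      congr 1
      unfold QP
      rw [Polynomial.eval_mul, Polynomial.eval_C, Polynomial.eval_prod, map_mul, eval_C,
        map_prod]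
      congr 1
      refine Finset.prod_congr rfl fun i _ => ?_
      rw [Polynomial.eval_sub, Polynomial.eval_X, Polynomial.eval_C, map_sub, eval_X, eval_C]

end Multi

/-- Let `V` be a real vector space, `m` a natural number and
`f : V → ℝ`.  The following are equivalent:
(1) `D_{v₁} ⋯ D_{v_{m+1}} f = 0` for all `v₁, …, v_{m+1} ∈ V`, and for every
finite-dimensional subspace `U ⊆ V` the restriction `f|_U` is continuous (equivalently,
for every `k` and every injective linear map `ι : ℝᵏ → V` the composition `f ∘ ι` is
continuous);
(2) for every `k` and every injective linear map `ι : ℝᵏ → V`, the composition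
`f ∘ ι : ℝᵏ → ℝ` is a polynomial function of total degree at most `m`. -/
theorem stmt10 {V : Type*} [AddCommGroup V] [Module ℝ V] (m : ℕ) (f : V → ℝ) :
    ((∀ v : Fin (m + 1) → V, ∀ x : V, ((List.ofFn v).foldr fwdDiffOp f) x = 0) ∧
      (∀ (k : ℕ) (ι : (Fin k → ℝ) →ₗ[ℝ] V), Function.Injective ι → Continuous (f ∘ ι)))
    ↔
    (∀ (k : ℕ) (ι : (Fin k → ℝ) →ₗ[ℝ] V), Function.Injective ι →
      ∃ p : MvPolynomial (Fin k) ℝ, p.totalDegree ≤ m ∧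
        ∀ x : Fin k → ℝ, f (ι x) = MvPolynomial.eval x p) := by
  constructor
  · rintro ⟨hd, hcont⟩ k ι hι
    have hdl : ∀ l : List V, l.length = m + 1 → ∀ x, (l.foldr fwdDiffOp f) x = 0 := by
      intro l hl x
      rw [list_eq_ofFn l hl]
      exact hd _ x
    have hc : Continuous (f ∘ ι) := hcont k ι hι
    have HG : ∀ l : List (Fin k → ℝ), l.length = m + 1 → ∀ x,
        (l.foldr fwdDiffOp (f ∘ ι)) x = 0 := by
      intro l hl x
      have h2 := foldr_fwdDiffOp_comp (⇑ι) (⇑ι) (fun a b => map_add ι a b) f l x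
      have hfc : (f ∘ ι) = fun y => f (ι y) := rfl
      rw [hfc, ← h2]
      apply hdl
      rw [List.length_map]
      exact hl
    obtain ⟨p, h1, h2⟩ := main_poly k m (f ∘ ι) hc HG
    exact ⟨p, h1, fun x => h2 x⟩
  · intro h2
    exact dir_rev m f h2
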